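/- Let Σ be a sofic transitive subshift on the alphabet A. Then Σ is infinite if and only if for every n ≥ 2 there exist k ∈ ℕ* and a set B ⊆ A^k with |B| ≥ n such that B^ω ⊆ Σ. -/

import Mathlib

variable {A : Type*}

/-- The onesided shift on `A^ℕ`. -/
def shiftN (z : ℕ → A) : ℕ → A := fun i => z (i + 1)

/-- The twosided shift on `A^ℤ`. -/
def shiftZ (x : ℤ → A) : ℤ → A := fun i => x (i + 1)

/-- A (onesided) subshift: a closed, shift-stable set of infinite words. -/
def IsSubshift [TopologicalSpace A] (S : Set (ℕ → A)) : Prop :=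
  IsClosed S ∧ ∀ z ∈ S, shiftN z ∈ S

/-- A 2-SFT: a subshift given by a set of forbidden words of length 2. -/
def IsTwoSFT (S : Set (ℕ → A)) : Prop :=
  ∃ Fb : Set (A × A), S = {z | ∀ i : ℕ, (z i, z (i + 1)) ∉ Fb}

/-- A k-SFT: a subshift given by a set of forbidden words of length k. -/
def IsKSFT (k : ℕ) (S : Set (ℕ → A)) : Prop :=
  ∃ Fb : Set (Fin k → A), S = {z | ∀ i : ℕ, (fun j : Fin k => z (i + (j : ℕ))) ∉ Fb}

/-- A subshift of finite type. -/
def IsSFT (S : Set (ℕ → A)) : Prop := ∃ k : ℕ, IsKSFT k S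

/-- A cellular automaton: a continuous self-map of `A^ℤ` commuting with the shift. -/
def IsCA [TopologicalSpace A] (F : (ℤ → A) → (ℤ → A)) : Prop :=
  Continuous F ∧ ∀ x, F (shiftZ x) = shiftZ (F x)

/-- The trace of `F` with initial condition `x`: the 0th column of the space-time diagram. -/
def caTrace (F : (ℤ → A) → (ℤ → A)) (x : ℤ → A) : ℕ → A := fun j => F^[j] x 0

/-- The trace subshift of `F`. -/
def traceSubshift (F : (ℤ → A) → (ℤ → A)) : Set (ℕ → A) := Set.range (caTrace F)

/-- A subshift is traceable if it is the trace subshift of some CA. -/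
def Traceable [TopologicalSpace A] (S : Set (ℕ → A)) : Prop :=
  ∃ F : (ℤ → A) → (ℤ → A), IsCA F ∧ traceSubshift F = S

/-- The q-th projection of an infinite word over the alphabet `A^k`. -/
def proj {k : ℕ} (q : Fin k) (z : ℕ → (Fin k → A)) : ℕ → A := fun j => z j q

/-- `π(Γ)`: the union of all projections. -/
def projAll {k : ℕ} (Γ : Set (ℕ → (Fin k → A))) : Set (ℕ → A) :=
  ⋃ q : Fin k, proj q '' Γ

/-- A subshift `S` on `A` is T1 if there is a 2-SFT `Γ ⊆ (A^k)^ℕ` with `π₀(Γ) = π(Γ) = S`. -/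
def IsT1 (S : Set (ℕ → A)) : Prop :=
  ∃ k : ℕ, ∃ hk : 0 < k, ∃ Γ : Set (ℕ → (Fin k → A)),
    IsTwoSFT Γ ∧ proj (⟨0, hk⟩ : Fin k) '' Γ = S ∧ projAll Γ = S

/-- A onesided CA: one admitting a local rule of anchor 0. -/
def IsOnesidedCA {C : Type*} (F : (ℤ → C) → (ℤ → C)) : Prop :=
  ∃ d : ℕ, ∃ f : (Fin d → C) → C, ∀ x i, F x i = f (fun j => x (i + (j : ℕ)))

/-- `S` is the k-trace of a onesided CA on some alphabet `B ⊆ A^k`. -/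
def KTraceable (k : ℕ) (S : Set (ℕ → A)) : Prop :=
  ∃ B : Set (Fin k → A), ∃ F : (ℤ → ↥B) → (ℤ → ↥B), IsOnesidedCA F ∧
    S = ⋃ q : Fin k, (fun z : ℕ → ↥B => fun j => ((z j : Fin k → A) q)) '' Set.range (caTrace F)

/-- `S` is a factor of `Γ`: a surjective continuous shift-commuting map from `Γ` onto `S`. -/
def IsFactorOf {B : Type*} [TopologicalSpace A] [TopologicalSpace B]
    (S : Set (ℕ → A)) (Γ : Set (ℕ → B)) : Prop :=
  ∃ φ : (ℕ → B) → (ℕ → A), ContinuousOn φ Γ ∧ φ '' Γ = S ∧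
    ∀ z ∈ Γ, φ (shiftN z) = shiftN (φ z)

/-- The language of a subshift: all finite factors of its elements. -/
def lang (S : Set (ℕ → A)) : Language A :=
  {w | ∃ z ∈ S, ∃ i : ℕ, w = List.ofFn (fun j : Fin w.length => z (i + (j : ℕ)))}

/-- A transitive subshift. -/
def IsTransitiveSubshift (S : Set (ℕ → A)) : Prop :=
  ∀ u ∈ lang S, ∀ v ∈ lang S, ∃ w : List A, u ++ w ++ v ∈ lang S

/-- A T2 subshift: sofic, and including an infinite transitive subshift. -/
def IsT2 [TopologicalSpace A] (S : Set (ℕ → A)) : Prop :=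
  (lang S).IsRegular ∧ ∃ Γ ⊆ S, IsSubshift Γ ∧ Γ.Infinite ∧ IsTransitiveSubshift Γ

/-- `B^ω`: infinite concatenations of words from `B ⊆ A^k`. -/
def Bomega {k : ℕ} (B : Set (Fin k → A)) : Set (ℕ → A) :=
  {z | ∀ i : ℕ, (fun q : Fin k => z (i * k + (q : ℕ))) ∈ B}

/-- A T3 subshift: T0 via a map `φ`, together with a periodic word `w ∉ φ(A)^*`. -/
def IsT3 (S : Set (ℕ → A)) : Prop :=
  ∃ φ : A → A, (∀ a : A, (fun j => φ^[j] a) ∈ S) ∧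
    ∃ w : List A, w ≠ [] ∧ (∃ a ∈ w, a ∉ Set.range φ) ∧
      ∃ z ∈ S, (∀ j : ℕ, z (j + w.length) = z j) ∧ ∀ i : Fin w.length, z (i : ℕ) = w.get i

def ofSeq (z : ℕ → A) (i N : ℕ) : List A := List.ofFn (fun j : Fin N => z (i + (j : ℕ)))

@[simp] lemma ofSeq_length (z : ℕ → A) (i N : ℕ) : (ofSeq z i N).length = N := by
  simp [ofSeq]

lemma ofSeq_getElem (z : ℕ → A) (i N j : ℕ) (hj : j < N) :
    (ofSeq z i N)[j]'(by simpa) = z (i + j) := by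
  simp [ofSeq]

lemma mem_lang_ofSeq {S : Set (ℕ → A)} {z : ℕ → A} (hz : z ∈ S) (i N : ℕ) :
    ofSeq z i N ∈ lang S := by
  refine ⟨z, hz, i, ?_⟩
  apply List.ext_getElem (by simp)
  intro j h1 h2
  simp [ofSeq]

lemma lang_char {S : Set (ℕ → A)} {w : List A} (hw : w ∈ lang S) :
    ∃ z ∈ S, ∃ i : ℕ, ∀ j (hj : j < w.length), w[j] = z (i + j) := by
  obtain ⟨z, hz, i, hwe⟩ := hw
  refine ⟨z, hz, i, fun j hj => ?_⟩
  rw [List.getElem_of_eq hwe hj]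
  simp

lemma lang_infix {S : Set (ℕ → A)} {w v : List A} (h : w <:+: v) (hv : v ∈ lang S) :
    w ∈ lang S := by
  obtain ⟨z, hz, i, hc⟩ := lang_char hv
  obtain ⟨s, t, rfl⟩ := h
  refine ⟨z, hz, i + s.length, ?_⟩
  apply List.ext_getElem (by simp)
  intro j h1 h2
  have hj : s.length + j < (s ++ w ++ t).length := by simp; omega
  have hl : s.length + j < (s ++ w).length := by simp; omega
  have := hc (s.length + j) hj
  rw [List.getElem_append_left hl, List.getElem_append_right (by omega)] at this
  simp only [Nat.add_sub_cancel_left] at this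
  rw [this]
  simp [add_assoc]

lemma lang_extend {S : Set (ℕ → A)} {w : List A} (hw : w ∈ lang S) :
    ∃ a, w ++ [a] ∈ lang S := by
  obtain ⟨z, hz, i, hc⟩ := lang_char hw
  refine ⟨z (i + w.length), ?_⟩
  have : w ++ [z (i + w.length)] = ofSeq z i (w.length + 1) := by
    apply List.ext_getElem (by simp)
    intro j h1 h2
    rw [ofSeq_getElem _ _ _ _ (by simpa using h2)]
    rcases Nat.lt_or_ge j w.length with hj | hj
    · rw [List.getElem_append_left hj]; exact hc j hj
    · have : j = w.length := by simp at h1; omega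
      subst this
      simp
  rw [this]; exact mem_lang_ofSeq hz _ _

lemma shiftN_iterate (z : ℕ → A) (i : ℕ) : shiftN^[i] z = fun j => z (j + i) := by
  induction i with
  | zero => rfl
  | succ n ih =>
    rw [Function.iterate_succ_apply', ih]
    funext j
    simp [shiftN]
    ring_nf

lemma mem_iterate_shift [TopologicalSpace A] {S : Set (ℕ → A)} (hS : IsSubshift S)
    {z : ℕ → A} (hz : z ∈ S) (i : ℕ) : shiftN^[i] z ∈ S := by
  induction i with
  | zero => exact hz
  | succ n ih => rw [Function.iterate_succ_apply']; exact hS.2 _ ih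

lemma mem_of_prefixes [TopologicalSpace A] [DiscreteTopology A] {S : Set (ℕ → A)}
    (hS : IsSubshift S) {z : ℕ → A} (h : ∀ N, ofSeq z 0 N ∈ lang S) : z ∈ S := by
  choose zz hzz i hc using fun N => lang_char (h N)
  set y : ℕ → (ℕ → A) := fun N => shiftN^[i N] (zz N) with hy
  have hyS : ∀ N, y N ∈ S := fun N => mem_iterate_shift hS (hzz N) _
  have hagree : ∀ N j, j < N → y N j = z j := by
    intro N j hj
    have := hc N j (by simpa)
    rw [ofSeq_getElem _ _ _ _ hj] at this
    simp only [hy, shiftN_iterate]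
    simpa [add_comm] using this.symm
  have : Filter.Tendsto y Filter.atTop (nhds z) := by
    rw [tendsto_pi_nhds]
    intro j
    apply Filter.Tendsto.congr' _ tendsto_const_nhds
    filter_upwards [Filter.eventually_ge_atTop (j + 1)] with N hN
    exact (hagree N j (by omega)).symm
  exact hS.1.mem_of_tendsto this (Filter.Eventually.of_forall hyS)

lemma nil_mem_lang {S : Set (ℕ → A)} (hne : S.Nonempty) : ([] : List A) ∈ lang S := by
  obtain ⟨z, hz⟩ := hne
  exact ⟨z, hz, 0, by simp⟩

def Sync (S : Set (ℕ → A)) (w : List A) : Prop :=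
  ∀ u v, u ++ w ∈ lang S → w ++ v ∈ lang S → u ++ w ++ v ∈ lang S

lemma sync_contain {S : Set (ℕ → A)} {w : List A} (hw : Sync S w) (c d : List A) :
    Sync S (c ++ w ++ d) := by
  intro u v hu hv
  have h1 : (u ++ c) ++ w ∈ lang S :=
    lang_infix ⟨[], d, by simp [List.append_assoc]⟩ hu
  have h2 : w ++ (d ++ v) ∈ lang S :=
    lang_infix ⟨c, [], by simp [List.append_assoc]⟩ hv
  have := hw (u ++ c) (d ++ v) h1 h2
  simpa [List.append_assoc] using this

lemma exists_sync {S : Set (ℕ → A)} (hsofic : (lang S).IsRegular) (hne : S.Nonempty) :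
    ∃ w, w ∈ lang S ∧ w ≠ [] ∧ Sync S w := by
  obtain ⟨σ, _, M, hM⟩ := hsofic
  have hmem : ∀ (x : List A), x ∈ lang S ↔ M.eval x ∈ M.accept := by
    intro x; rw [← hM]; rfl
  have hsplit : ∀ (x v : List A), x ++ v ∈ lang S ↔ M.evalFrom (M.eval x) v ∈ M.accept := by
    intro x v
    rw [hmem, DFA.eval, DFA.evalFrom_of_append]
  set Fol : σ → Set (List A) := fun q => {v | M.evalFrom q v ∈ M.accept} with hFol
  set s : Set σ := {q | ∃ w ∈ lang S, M.eval w = q} with hs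
  have hsne : s.Nonempty := ⟨M.eval [], [], nil_mem_lang hne, rfl⟩
  obtain ⟨q0, hq0, hmin0⟩ := Set.Finite.exists_minimalFor Fol s (Set.toFinite s) hsne
  have hmin : ∀ a' ∈ s, Fol a' ≤ Fol q0 → Fol q0 = Fol a' := fun a' ha h => le_antisymm (hmin0 ha h) h
  obtain ⟨w0, hw0L, hw0q⟩ := hq0
  have hsync0 : Sync S w0 := by
    intro u v hu hv
    have hq' : M.eval (u ++ w0) ∈ s := ⟨u ++ w0, hu, rfl⟩
    have hsub : Fol (M.eval (u ++ w0)) ⊆ Fol q0 := by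
      intro v' hv'
      have : (u ++ w0) ++ v' ∈ lang S := (hsplit _ _).2 hv'
      have : w0 ++ v' ∈ lang S := lang_infix ⟨u, [], by simp [List.append_assoc]⟩ this
      rw [← hw0q]
      exact (hsplit _ _).1 this
    have heq := hmin _ hq' hsub
    have hvin : v ∈ Fol q0 := by rw [← hw0q]; exact (hsplit _ _).1 hv
    rw [heq] at hvin
    exact (hsplit _ _).2 hvin
  obtain ⟨a, ha⟩ := lang_extend hw0L
  refine ⟨w0 ++ [a], ha, by simp, ?_⟩
  have := sync_contain hsync0 [] [a]
  simpa using this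

lemma exists_rspecial [Finite A] [Inhabited A] {S : Set (ℕ → A)} (hinf : S.Infinite)
    (htrans : IsTransitiveSubshift S) {w : List A} (hwL : w ∈ lang S) (hwne : w ≠ []) :
    ∃ q a b, q ∈ lang S ∧ (∃ c d, q = c ++ w ++ d) ∧ a ≠ b ∧
      q ++ [a] ∈ lang S ∧ q ++ [b] ∈ lang S := by
  by_contra hcon
  push_neg at hcon
  have H : ∀ q ∈ lang S, (∃ c d, q = c ++ w ++ d) → ∀ a b,
      q ++ [a] ∈ lang S → q ++ [b] ∈ lang S → a = b := by
    intro q hq hcd a b ha hb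
    by_contra hab
    exact (hcon q a b hq hcd hab ha) hb
  classical
  -- the choice extension function
  set g : List A → A := fun q => if h : q ∈ lang S then (lang_extend h).choose else default
    with hg
  have hgL : ∀ q, q ∈ lang S → q ++ [g q] ∈ lang S := by
    intro q h
    simp only [hg, dif_pos h]
    exact (lang_extend h).choose_spec
  -- the canonical extension chain
  set e : ℕ → List A := fun n => Nat.rec w (fun _ q => q ++ [g q]) n with he
  have he0 : e 0 = w := rfl
  have hes : ∀ n, e (n + 1) = e n ++ [g (e n)] := fun n => rfl
  have he_mem : ∀ n, e n ∈ lang S := by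
    intro n; induction n with
    | zero => exact hwL
    | succ n ih => rw [hes]; exact hgL _ ih
  have he_len : ∀ n, (e n).length = w.length + n := by
    intro n; induction n with
    | zero => simp [he0]
    | succ n ih => rw [hes]; simp [ih]; omega
  have he_prefix : ∀ n, w <+: e n := by
    intro n; induction n with
    | zero => simp [he0]
    | succ n ih => rw [hes]; exact ih.trans (List.prefix_append _ _)
  have he_chain : ∀ n m, n ≤ m → e n <+: e m := by
    intro n m h
    induction m with
    | zero => simp_all
    | succ m ih =>
      rcases Nat.lt_or_ge n (m+1) with h' | h'
      · exact (ih (by omega)).trans (by rw [hes]; exact List.prefix_append _ _)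
      · have : n = m + 1 := by omega
        subst this; rfl
  -- uniqueness of extensions
  have huniq : ∀ n q, q ∈ lang S → w <+: q → q.length = w.length + n → q = e n := by
    intro n
    induction n with
    | zero =>
      intro q hq hpre hlen
      exact (hpre.eq_of_length (by omega)).symm
    | succ n ih =>
      intro q hq hpre hlen
      obtain ⟨r, hr⟩ := hpre
      have hrne : r ≠ [] := by
        intro h; subst h; simp at hr; subst hr; omega
      have hqne : q ≠ [] := by
        intro h; subst h; simp at hlen
      have hdl : q.dropLast = w ++ r.dropLast := by
        rw [← hr, List.dropLast_append_of_ne_nil hrne]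
      have hdlL : q.dropLast ∈ lang S :=
        lang_infix ⟨[], [q.getLast hqne], by simp [List.dropLast_append_getLast]⟩ hq
      have hdle : q.dropLast = e n := by
        apply ih _ hdlL (⟨r.dropLast, hdl.symm⟩) _
        rw [List.length_dropLast, hlen]; omega
      have hlast : q.getLast hqne = g (e n) := by
        apply H (e n) (he_mem n) ⟨[], ?_⟩
        · rw [← hdle, List.dropLast_append_getLast]; exact hq
        · exact hgL _ (he_mem n)
        · obtain ⟨d, hd⟩ := he_prefix n
          exact ⟨d, by simp [hd]⟩
      rw [← List.dropLast_append_getLast hqne, hdle, hlast, ← hes]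
  -- the limit word
  set ξ : ℕ → A := fun j => (e (j + 1)).getD j default with hxi
  have hxi_get : ∀ n j (h : j < (e n).length), (e n)[j] = ξ j := by
    intro n j h
    have hj1 : j < (e (j+1)).length := by have := he_len (j+1); omega
    rw [hxi]
    simp only []
    rw [List.getD_eq_getElem _ _ hj1]
    rcases le_total n (j+1) with hc | hc
    · exact List.IsPrefix.getElem (he_chain n (j+1) hc) h
    · exact (List.IsPrefix.getElem (he_chain (j+1) n hc) hj1).symm
  -- windows of ξ are in the language
  have hwin : ∀ i N, List.ofFn (fun r : Fin N => ξ (i + (r : ℕ))) ∈ lang S := by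
    intro i N
    set M := i + N with hM
    have hlen : i + N ≤ (e M).length := by have := he_len M; omega
    have heq : List.ofFn (fun r : Fin N => ξ (i + (r : ℕ))) = ((e M).drop i).take N := by
      apply List.ext_getElem (by simp; omega)
      intro j h1 h2
      have hj : j < N := by simpa using h1
      have hij : i + j < (e M).length := by have := he_len M; omega
      rw [List.getElem_take, List.getElem_drop, hxi_get M (i+j) hij]
      simp
    rw [heq]
    exact lang_infix (((List.take_prefix _ _).isInfix).trans
      ((List.drop_suffix _ _).isInfix)) (he_mem M)
  -- every language word occurs in ξ
  have hOcc : ∀ x ∈ lang S, ∃ i, ∀ j (hj : j < x.length), x[j] = ξ (i + j) := by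
    intro x hx
    obtain ⟨t, ht⟩ := htrans w hwL x hx
    have hpre : w <+: w ++ t ++ x := ⟨t ++ x, by simp [List.append_assoc]⟩
    have hqlen : (w ++ t ++ x).length = w.length + (t.length + x.length) := by simp
    have hqe : w ++ t ++ x = e (t.length + x.length) := huniq _ _ ht hpre hqlen
    refine ⟨(w ++ t).length, fun j hj => ?_⟩
    have h1 : (w ++ t).length ≤ (w ++ t).length + j := by omega
    have h2 : (w ++ t).length + j < (w ++ t ++ x).length := by simp; omega
    calc x[j] = (w ++ t ++ x)[(w ++ t).length + j]'h2 := by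
            rw [List.getElem_append_right h1]; congr 1; omega
      _ = (e (t.length + x.length))[(w ++ t).length + j]'(by
            rw [← hqe]; exact h2) := List.getElem_of_eq hqe h2
      _ = ξ ((w ++ t).length + j) := hxi_get _ _ _
  -- the period
  obtain ⟨t0, ht0⟩ := htrans w hwL w hwL
  set p := (w ++ t0).length with hp
  have hp1 : 1 ≤ p := by have := List.length_pos_iff.2 hwne; simp [hp]; omega
  have hqe0 : w ++ t0 ++ w = e (t0.length + w.length) :=
    huniq _ _ ht0 ⟨t0 ++ w, by simp [List.append_assoc]⟩ (by simp)
  have hocc2 : ∀ j (hj : j < w.length), ξ (p + j) = w[j] := by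
    intro j hj
    have hlen2 : p + j < (w ++ t0 ++ w).length := by simp [hp]; omega
    have h1 : (w ++ t0).length ≤ p + j := by simp [hp]
    calc ξ (p + j) = (e (t0.length + w.length))[p + j]'(by
            rw [← hqe0]; exact hlen2) := (hxi_get _ _ _).symm
      _ = (w ++ t0 ++ w)[p + j]'hlen2 := (List.getElem_of_eq hqe0 hlen2).symm
      _ = w[j] := by rw [List.getElem_append_right h1]; congr 1; omega
  have hocc0 : ∀ j (hj : j < w.length), ξ j = w[j] := by
    intro j hj
    have hpj : j < (e (j+1)).length := by have := he_len (j+1); omega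
    rw [← hxi_get (j+1) j hpj]
    exact (List.IsPrefix.getElem (he_prefix (j+1)) hj).symm
  -- ξ is periodic with period p
  have hper : ∀ j, ξ (p + j) = ξ j := by
    have main : ∀ N j, j < w.length + N → ξ (p + j) = ξ j := by
      intro N j hj
      set v := List.ofFn (fun r : Fin (w.length + N) => ξ (p + (r : ℕ))) with hv
      have hvL : v ∈ lang S := hwin p (w.length + N)
      have hvlen : v.length = w.length + N := by simp [hv]
      have hvpre : w <+: v := by
        have : w = v.take w.length := by
          apply List.ext_getElem (by simp [hvlen])
          intro r hr1 hr2
          rw [List.getElem_take]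
          have hrv : r < v.length := by omega
          have : v[r]'hrv = ξ (p + r) := by simp [hv]
          rw [this, hocc2 r hr1]
        rw [this]; exact List.take_prefix _ _
      have hve : v = e N := huniq N v hvL hvpre (by simp [hvlen])
      have hj2 : j < v.length := by omega
      have e1 : v[j]'hj2 = ξ j := by
        calc v[j]'hj2 = (e N)[j]'(by rw [← hve]; exact hj2) := List.getElem_of_eq hve hj2
          _ = ξ j := hxi_get _ _ _
      have e2 : v[j]'hj2 = ξ (p + j) := by simp [hv]
      rw [← e1, e2]
    intro j
    exact main (j + 1) j (by omega)
  -- hence every element of S is p-periodic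
  have hzper : ∀ z ∈ S, ∀ j, z (j + p) = z j := by
    intro z hz j
    obtain ⟨i, hi⟩ := hOcc (ofSeq z 0 (j + p + 1)) (mem_lang_ofSeq hz 0 (j + p + 1))
    have l1 : j + p < (ofSeq z 0 (j + p + 1)).length := by simp
    have l2 : j < (ofSeq z 0 (j + p + 1)).length := by simp
    have e1 := hi (j + p) l1
    have e2 := hi j l2
    rw [ofSeq_getElem _ _ _ _ (by omega)] at e1
    rw [ofSeq_getElem _ _ _ _ (by omega)] at e2
    simp only [Nat.zero_add] at e1 e2
    rw [e1, e2]
    have := hper (i + j)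
    rw [show i + (j + p) = p + (i + j) by omega, this]
  have hmod : ∀ z ∈ S, ∀ j, z j = z (j % p) := by
    intro z hz j
    induction j using Nat.strong_induction_on with
    | _ j ih =>
      rcases Nat.lt_or_ge j p with h | h
      · rw [Nat.mod_eq_of_lt h]
      · have : z j = z (j - p) := by
          rw [← hzper z hz (j - p)]; congr 1; omega
        rw [this, ih (j - p) (by omega), Nat.mod_eq_sub_mod h]
  -- so S is finite: contradiction
  have hfin : S.Finite := by
    rw [← Set.finite_coe_iff]
    apply Finite.of_injective (fun z : S => (fun i : Fin p => z.1 (i : ℕ)))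
    intro z1 z2 hz
    apply Subtype.ext
    funext j
    have h1 := hmod z1.1 z1.2 j
    have h2 := hmod z2.1 z2.2 j
    rw [h1, h2]
    have : j % p < p := Nat.mod_lt _ (by omega)
    exact congrFun hz ⟨j % p, this⟩
  exact hinf hfin

lemma flatten_shift {S : Set (ℕ → A)} (q : List A) (W : Bool → List A) (lb : List Bool) :
    (lb.map (fun b => q ++ W b)).flatten ++ q = q ++ (lb.map (fun b => W b ++ q)).flatten := by
  induction lb with
  | nil => simp
  | cons b lb ih => simp only [List.map_cons, List.flatten_cons, List.append_assoc] at ih ⊢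
                    rw [ih]

lemma sync_flatten {S : Set (ℕ → A)} {q : List A} (hq : Sync S q) (hqL : q ∈ lang S)
    (W : Bool → List A) (hW : ∀ b, q ++ W b ++ q ∈ lang S) (lb : List Bool) :
    (lb.map (fun b => q ++ W b)).flatten ++ q ∈ lang S := by
  rw [flatten_shift (S := S)]
  induction lb with
  | nil => simpa using hqL
  | cons b lb ih =>
    have h1 : (q ++ W b) ++ q ∈ lang S := by
      have := hW b; simpa [List.append_assoc] using this
    have := hq (q ++ W b) ((lb.map (fun b => W b ++ q)).flatten) h1 ih
    simpa [List.append_assoc] using this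

lemma flatten_ofFn {k : ℕ} (hk : 0 < k) (Xf : Bool → Fin k → A) (lb : List Bool) :
    (lb.map (fun b => List.ofFn (Xf b))).flatten =
      List.ofFn (fun j : Fin (lb.length * k) =>
        Xf (lb.getD ((j : ℕ) / k) false) ⟨(j : ℕ) % k, Nat.mod_lt _ hk⟩) := by
  induction lb with
  | nil => simp
  | cons b lb ih =>
    simp only [List.map_cons, List.flatten_cons, ih]
    apply List.ext_getElem (by simp [Nat.succ_mul]; omega)
    intro j h1 h2
    have hjlen : j < (b :: lb).length * k := by simpa using h2
    rcases Nat.lt_or_ge j k with hj | hj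
    · rw [List.getElem_append_left (by simpa)]
      simp only [List.getElem_ofFn]
      congr 1
      · simp [Nat.div_eq_of_lt hj]
      · ext; simp [Nat.mod_eq_of_lt hj]
    · rw [List.getElem_append_right (by simpa)]
      simp only [List.getElem_ofFn, List.length_ofFn]
      have hrw : j = (j - k) + k := by omega
      congr 1
      · rw [hrw, Nat.add_div_right _ hk]
        simp [List.getD_cons_succ]
      · ext
        simp only []
        rw [hrw, Nat.add_mod_right]
        simp

/-- A sofic transitive subshift `S` is infinite iff for every `n ≥ 2`
there are `k ≥ 1` and `B ⊆ A^k` with `|B| ≥ n` and `B^ω ⊆ S`. -/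
theorem stmt7 [Fintype A] [TopologicalSpace A] [DiscreteTopology A]
    (hA : 2 ≤ Fintype.card A) (S : Set (ℕ → A)) (hS : IsSubshift S)
    (hsofic : (lang S).IsRegular) (htrans : IsTransitiveSubshift S) :
    S.Infinite ↔ ∀ n : ℕ, 2 ≤ n →
      ∃ k : ℕ, 0 < k ∧ ∃ B : Set (Fin k → A), n ≤ B.ncard ∧ Bomega B ⊆ S := by
  have hNA : Nonempty A := Fintype.card_pos_iff.mp (by omega)
  constructor
  · -- forward direction
    intro hinf n hn
    letI : Inhabited A := Classical.inhabited_of_nonempty hNA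
    have hn0 : 0 < n := by omega
    obtain ⟨w, hwL, hwne, hwsync⟩ := exists_sync hsofic hinf.nonempty
    obtain ⟨q, a, b0, hqL, hqwcd, hab, haL, hbL⟩ := exists_rspecial hinf htrans hwL hwne
    have hsyncq : Sync S q := by
      obtain ⟨c, d, rfl⟩ := hqwcd
      exact sync_contain hwsync c d
    obtain ⟨s, hs⟩ := htrans (q ++ [a]) haL q hqL
    obtain ⟨t, ht⟩ := htrans (q ++ [b0]) hbL q hqL
    set W : Bool → List A :=
      fun e => if e then a :: (s ++ (q ++ b0 :: t)) else b0 :: (t ++ (q ++ a :: s)) with hW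
    have hqWq : ∀ e, q ++ W e ++ q ∈ lang S := by
      intro e
      cases e
      · have h1 : (q ++ b0 :: t) ++ q ∈ lang S := by
          simpa [List.append_assoc] using ht
        have h2 : q ++ (a :: (s ++ q)) ∈ lang S := by
          simpa [List.append_assoc] using hs
        have := hsyncq (q ++ b0 :: t) (a :: (s ++ q)) h1 h2
        simpa [hW, List.append_assoc] using this
      · have h1 : (q ++ a :: s) ++ q ∈ lang S := by
          simpa [List.append_assoc] using hs
        have h2 : q ++ (b0 :: (t ++ q)) ∈ lang S := by
          simpa [List.append_assoc] using ht
        have := hsyncq (q ++ a :: s) (b0 :: (t ++ q)) h1 h2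
        simpa [hW, List.append_assoc] using this
    set k : ℕ := (q ++ W true).length with hkdef
    have hlen : ∀ e, (q ++ W e).length = k := by
      intro e; cases e <;> simp [hkdef, hW] <;> omega
    have hk : 0 < k := by rw [hkdef]; simp [hW]
    have hqk : q.length < k := by rw [hkdef]; simp [hW]
    set Xf : Bool → Fin k → A := fun e i => (q ++ W e).getD i default with hXf
    have hblock : ∀ e, q ++ W e = List.ofFn (Xf e) := by
      intro e
      apply List.ext_getElem (by simp [hlen e])
      intro j h1 h2
      simp only [hXf, List.getElem_ofFn]
      exact (List.getD_eq_getElem _ _ h1).symm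
    have hXhead : ∀ e, Xf e ⟨q.length, hqk⟩ = (if e then a else b0) := by
      intro e
      have hql : q.length < (q ++ W e).length := by rw [hlen e]; exact hqk
      simp only [hXf]
      rw [List.getD_eq_getElem _ _ hql, List.getElem_append_right le_rfl]
      cases e <;> simp [hW]
    -- the block set
    set F : (Fin n → Bool) → (Fin (n * k) → A) :=
      fun c i => Xf (c ⟨(i : ℕ) / k, (Nat.div_lt_iff_lt_mul hk).mpr i.isLt⟩)
        ⟨(i : ℕ) % k, Nat.mod_lt _ hk⟩ with hF
    have hFinj : Function.Injective F := by
      intro c c' hcc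
      funext tt
      have hidx : (tt : ℕ) * k + q.length < n * k :=
        calc (tt : ℕ) * k + q.length < (tt : ℕ) * k + k := Nat.add_lt_add_left hqk _
          _ = ((tt : ℕ) + 1) * k := by ring
          _ ≤ n * k := Nat.mul_le_mul_right _ (by omega)
      have hthis := congrFun hcc ⟨(tt : ℕ) * k + q.length, hidx⟩
      simp only [hF] at hthis
      have hdiv : ((tt : ℕ) * k + q.length) / k = (tt : ℕ) := by
        rw [show (tt : ℕ) * k + q.length = q.length + (tt : ℕ) * k by ring,
          Nat.add_mul_div_right _ _ hk, Nat.div_eq_of_lt hqk]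
        omega
      have hmod : ((tt : ℕ) * k + q.length) % k = q.length := by
        rw [show (tt : ℕ) * k + q.length = q.length + (tt : ℕ) * k by ring,
          Nat.add_mul_mod_self_right, Nat.mod_eq_of_lt hqk]
      simp only [hdiv, hmod] at hthis
      rw [show (⟨(tt : ℕ), tt.isLt⟩ : Fin n) = tt from rfl] at hthis
      rw [hXhead, hXhead] at hthis
      by_contra hne
      rcases Bool.eq_false_or_eq_true (c tt) with h1 | h1 <;>
        rcases Bool.eq_false_or_eq_true (c' tt) with h2 | h2 <;>
          simp [h1, h2, hab, Ne.symm hab] at hthis hne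
    refine ⟨n * k, by positivity, F '' Set.univ, ?_, ?_⟩
    · rw [Set.ncard_image_of_injective _ hFinj, Set.ncard_univ]
      simp only [Nat.card_eq_fintype_card, Fintype.card_fun, Fintype.card_bool,
        Fintype.card_fin]
      exact Nat.lt_two_pow_self.le
    · -- Bomega ⊆ S
      intro z hz
      have hz' : ∀ i : ℕ, ∃ c : Fin n → Bool, ∀ r : Fin (n * k),
          z (i * (n * k) + (r : ℕ)) = F c r := by
        intro i
        obtain ⟨c, -, hc⟩ := hz i
        exact ⟨c, fun r => (congrFun hc r).symm⟩
      choose ci hci using hz'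
      set c : ℕ → Bool := fun u => ci (u / n) ⟨u % n, Nat.mod_lt _ hn0⟩ with hc
      have hzj : ∀ j : ℕ, z j = Xf (c (j / k)) ⟨j % k, Nat.mod_lt _ hk⟩ := by
        intro j
        have hK0 : 0 < n * k := by positivity
        have hr : j % (n * k) < n * k := Nat.mod_lt _ hK0
        have hrk : j % (n * k) / k < n := (Nat.div_lt_iff_lt_mul hk).mpr hr
        have hDM : j / (n * k) * (n * k) + j % (n * k) = j := by
          have h0 := Nat.div_add_mod j (n * k)
          have h1 : j / (n * k) * (n * k) = n * k * (j / (n * k)) := by ring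
          omega
        have hjd : j % (n * k) + j / (n * k) * n * k = j := by
          have h1 : j / (n * k) * n * k = j / (n * k) * (n * k) := by ring
          omega
        have hdivk : j / k = j % (n * k) / k + j / (n * k) * n := by
          conv_lhs => rw [← hjd]
          rw [Nat.add_mul_div_right _ _ hk]
        have hmodk : j % k = j % (n * k) % k := by
          conv_lhs => rw [← hjd]
          rw [Nat.add_mul_mod_self_right]
        have hdivn : j / k / n = j / (n * k) := by
          rw [hdivk, Nat.add_mul_div_right _ _ hn0, Nat.div_eq_of_lt hrk]
          omega
        have hmodn : j / k % n = j % (n * k) / k := by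
          rw [hdivk, Nat.add_mul_mod_self_right, Nat.mod_eq_of_lt hrk]
        have e1 := hci (j / (n * k)) ⟨j % (n * k), hr⟩
        simp only [hF] at e1
        rw [hDM] at e1
        rw [e1]
        simp only [hc]
        congr 1
        · congr 1
          · rw [hdivn]
          · exact Fin.ext hmodn.symm
        · exact Fin.ext hmodk.symm
      apply mem_of_prefixes hS
      intro N
      set lbN : List Bool := List.ofFn (fun u : Fin N => c (u : ℕ)) with hlbN
      have hlbNlen : lbN.length = N := by simp [hlbN]
      have hflatL : (lbN.map (fun e => q ++ W e)).flatten ++ q ∈ lang S :=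
        sync_flatten hsyncq hqL W hqWq lbN
      have hflatL2 : (lbN.map (fun e => q ++ W e)).flatten ∈ lang S :=
        lang_infix ⟨[], q, by simp⟩ hflatL
      have hmapeq : lbN.map (fun e => q ++ W e) = lbN.map (fun e => List.ofFn (Xf e)) :=
        List.map_congr_left (fun e _ => hblock e)
      have hflat_eq := (congrArg List.flatten hmapeq).trans (flatten_ofFn hk Xf lbN)
      have hNk : N ≤ N * k := Nat.le_mul_of_pos_right N hk
      have hflatlen : (lbN.map (fun e => q ++ W e)).flatten.length = N * k := by
        rw [hflat_eq]; simp [hlbNlen]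
      have hprefix : ofSeq z 0 N = (lbN.map (fun e => q ++ W e)).flatten.take N := by
        apply List.ext_getElem (by simp [hflatlen]; omega)
        intro j h1 h2
        have hjN : j < N := by simpa using h1
        have hjlen : j < (lbN.map (fun e => q ++ W e)).flatten.length := by omega
        rw [List.getElem_take, List.getElem_of_eq hflat_eq hjlen]
        simp only [List.getElem_ofFn]
        rw [ofSeq_getElem _ _ _ _ hjN]
        have hgetD : lbN.getD (j / k) false = c (j / k) := by
          have hjk : j / k < N := lt_of_le_of_lt (Nat.div_le_self j k) hjN
          rw [hlbN, List.getD_eq_getElem _ _ (by simpa using hjk), List.getElem_ofFn]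
        rw [hgetD, zero_add]
        exact hzj j
      rw [hprefix]
      exact lang_infix (List.take_prefix _ _).isInfix hflatL2
  · -- reverse direction
    intro h
    obtain ⟨k, hk, B, hB, hsub⟩ := h 2 le_rfl
    obtain ⟨x, hx, y, hy, hxy⟩ := (Set.one_lt_ncard (Set.toFinite B)).mp (by omega)
    obtain ⟨r0, hr0⟩ : ∃ r0 : Fin k, x r0 ≠ y r0 := by
      by_contra hcon
      push_neg at hcon
      exact hxy (funext hcon)
    set f : (ℕ → Bool) → (ℕ → A) :=
      fun c j => (if c (j / k) then x else y) ⟨j % k, Nat.mod_lt _ hk⟩ with hf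
    have hmem : ∀ c, f c ∈ Bomega B := by
      intro c i
      have heq : (fun r : Fin k => f c (i * k + (r : ℕ))) = if c i then x else y := by
        funext r
        simp only [hf]
        have hd : (i * k + (r : ℕ)) / k = i := by
          rw [show i * k + (r : ℕ) = (r : ℕ) + i * k by ring, Nat.add_mul_div_right _ _ hk,
            Nat.div_eq_of_lt r.isLt]
          omega
        have hm : (i * k + (r : ℕ)) % k = (r : ℕ) := by
          rw [show i * k + (r : ℕ) = (r : ℕ) + i * k by ring, Nat.add_mul_mod_self_right,
            Nat.mod_eq_of_lt r.isLt]
        simp only [hd, hm]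
      rw [heq]
      split <;> assumption
    have hinj : Function.Injective f := by
      intro c c' hcc
      funext i
      have hth := congrFun hcc (i * k + (r0 : ℕ))
      simp only [hf] at hth
      have hd : (i * k + (r0 : ℕ)) / k = i := by
        rw [show i * k + (r0 : ℕ) = (r0 : ℕ) + i * k by ring, Nat.add_mul_div_right _ _ hk,
          Nat.div_eq_of_lt r0.isLt]
        omega
      have hm : (i * k + (r0 : ℕ)) % k = (r0 : ℕ) := by
        rw [show i * k + (r0 : ℕ) = (r0 : ℕ) + i * k by ring, Nat.add_mul_mod_self_right,
          Nat.mod_eq_of_lt r0.isLt]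
      simp only [hd, hm] at hth
      have hth2 : (if c i then x else y) r0 = (if c' i then x else y) r0 := hth
      by_contra hne
      rcases Bool.eq_false_or_eq_true (c i) with h1 | h1 <;>
        rcases Bool.eq_false_or_eq_true (c' i) with h2 | h2 <;>
          simp [h1, h2, hr0, Ne.symm hr0] at hth2 hne
    exact Set.infinite_of_injective_forall_mem (f := f) hinj fun c => hsub (hmem c)
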